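/- A function holomorphic on an annulus {z : r < |z - a| < R} (with 0 ≤ r < R ≤ ∞) can be represented on the annulus by a Laurent series Σ_{n ∈ ℤ} c_n (z - a)^n converging on the annulus. -/

import Mathlib

open Complex Metric Set
open scoped ENNReal Real

section Aux

variable {a : ℂ} {r : ℝ} {R : ℝ≥0∞} {f : ℂ → ℂ}

private lemma laurent_isOpen (a : ℂ) (r : ℝ) (R : ℝ≥0∞) :
    IsOpen {z : ℂ | r < ‖z - a‖ ∧ (ENNReal.ofReal ‖z - a‖) < R} := by
  have h1 : IsOpen {z : ℂ | r < ‖z - a‖} :=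
    isOpen_lt continuous_const ((continuous_id.sub continuous_const).norm)
  have h2 : IsOpen {z : ℂ | (ENNReal.ofReal ‖z - a‖) < R} :=
    isOpen_Iio.preimage
      (ENNReal.continuous_ofReal.comp ((continuous_id.sub continuous_const).norm))
  exact h1.inter h2

private lemma laurent_subset (hr : 0 ≤ r) {ρ₁ ρ₂ : ℝ} (h1 : r < ρ₁)
    (h2 : ENNReal.ofReal ρ₂ < R) :
    closedBall a ρ₂ \ ball a ρ₁ ⊆ {z : ℂ | r < ‖z - a‖ ∧ (ENNReal.ofReal ‖z - a‖) < R} := by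
  rintro ζ ⟨hζ₂, hζ₁⟩
  rw [mem_closedBall, dist_eq_norm] at hζ₂
  rw [mem_ball, dist_eq_norm, not_lt] at hζ₁
  exact ⟨h1.trans_le hζ₁, lt_of_le_of_lt (ENNReal.ofReal_le_ofReal hζ₂) h2⟩

/-- Differentiability of `(ζ - a) ^ m * f ζ` on the annulus. -/
private lemma laurent_diffAt (hr : 0 ≤ r)
    (hf : DifferentiableOn ℂ f {z : ℂ | r < ‖z - a‖ ∧ (ENNReal.ofReal ‖z - a‖) < R}) (m : ℤ)
    {ζ : ℂ} (hζ : ζ ∈ {z : ℂ | r < ‖z - a‖ ∧ (ENNReal.ofReal ‖z - a‖) < R}) :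
    DifferentiableAt ℂ (fun ζ => (ζ - a) ^ m * f ζ) ζ := by
  have hne : ζ - a ≠ 0 := by
    intro h
    rw [sub_eq_zero] at h
    subst h
    simp only [mem_setOf_eq, sub_self, norm_zero] at hζ
    exact absurd hζ.1 (not_lt.2 hr)
  have hfd : DifferentiableAt ℂ f ζ :=
    hf.differentiableAt ((laurent_isOpen a r R).mem_nhds hζ)
  exact (((differentiableAt_zpow.2 (Or.inl hne)).comp ζ
    (differentiableAt_id.sub_const a))).mul hfd

/-- The integral of `(ζ - a) ^ m * f ζ` over a circle inside the annulus does not depend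
on the radius (ordered version). -/
private lemma laurent_radius_indep_le (hr : 0 ≤ r)
    (hf : DifferentiableOn ℂ f {z : ℂ | r < ‖z - a‖ ∧ (ENNReal.ofReal ‖z - a‖) < R}) (m : ℤ)
    {ρ₁ ρ₂ : ℝ} (h1 : r < ρ₁) (hR2 : ENNReal.ofReal ρ₂ < R) (h12 : ρ₁ ≤ ρ₂) :
    (∮ ζ in C(a, ρ₂), (ζ - a) ^ m * f ζ) = ∮ ζ in C(a, ρ₁), (ζ - a) ^ m * f ζ := by
  have hsub := laurent_subset (a := a) hr h1 hR2
  refine Complex.circleIntegral_eq_of_differentiable_on_annulus_off_countable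
    (hr.trans_lt h1) h12 countable_empty
    (fun ζ hζ => (laurent_diffAt hr hf m (hsub hζ)).continuousAt.continuousWithinAt)
    (fun ζ hζ => laurent_diffAt hr hf m (hsub ⟨ball_subset_closedBall hζ.1.1, fun h => hζ.1.2 (ball_subset_closedBall h)⟩))

private lemma laurent_radius_indep (hr : 0 ≤ r)
    (hf : DifferentiableOn ℂ f {z : ℂ | r < ‖z - a‖ ∧ (ENNReal.ofReal ‖z - a‖) < R}) (m : ℤ)
    {ρ₁ ρ₂ : ℝ} (h1 : r < ρ₁) (h2 : r < ρ₂) (hR1 : ENNReal.ofReal ρ₁ < R)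
    (hR2 : ENNReal.ofReal ρ₂ < R) :
    (∮ ζ in C(a, ρ₂), (ζ - a) ^ m * f ζ) = ∮ ζ in C(a, ρ₁), (ζ - a) ^ m * f ζ := by
  rcases le_total ρ₁ ρ₂ with h | h
  · exact laurent_radius_indep_le hr hf m h1 hR2 h
  · exact (laurent_radius_indep_le hr hf m h2 hR1 h).symm

/-- Negative-part analogue of `hasSum_two_pi_I_cauchyPowerSeries_integral`. -/
private theorem hasSum_neg_part {f : ℂ → ℂ} {c : ℂ} {R : ℝ} {w : ℂ}
    (hf : CircleIntegrable f c R) (hR : 0 < R) (hw : R < ‖w - c‖) :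
    HasSum (fun n : ℕ => ∮ z in C(c, R), ((z - c) / (w - c)) ^ n * ((w - c)⁻¹ * f z))
      (-∮ z in C(c, R), (z - w)⁻¹ * f z) := by
  have hd : 0 < ‖w - c‖ := hR.trans hw
  have hwc : w - c ≠ 0 := by
    intro h; rw [h] at hd; simp at hd
  have hq : R / ‖w - c‖ ∈ Ico (0 : ℝ) 1 :=
    ⟨div_nonneg hR.le hd.le, (div_lt_one hd).2 hw⟩
  have key : HasSum (fun n : ℕ => ∮ z in C(c, R), ((z - c) / (w - c)) ^ n * ((w - c)⁻¹ * f z))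
      (∮ z in C(c, R), -((z - w)⁻¹ * f z)) := by
    refine intervalIntegral.hasSum_integral_of_dominated_convergence
        (fun n θ => ‖f (circleMap c R θ)‖ * (R / ‖w - c‖) *
          (R / ‖w - c‖) ^ n)
        (fun n => ?_) (fun n => ?_) ?_ ?_ ?_
    · simp only [deriv_circleMap]
      apply_rules [MeasureTheory.AEStronglyMeasurable.mul, hf.def'.1] <;>
        apply Measurable.aestronglyMeasurable <;> fun_prop
    · refine Filter.Eventually.of_forall fun θ _ => le_of_eq ?_
      simp only [deriv_circleMap, smul_eq_mul, norm_mul, norm_pow,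
        norm_div, norm_circleMap_zero, Complex.norm_I, norm_inv, mul_one, abs_of_pos hR,
        circleMap_sub_center, div_pow]
      field_simp
    · exact Filter.Eventually.of_forall fun _ _ =>
        (summable_geometric_of_lt_one hq.1 hq.2).mul_left _
    · simp only [mul_assoc, tsum_mul_left]
      rw [tsum_geometric_of_lt_one hq.1 hq.2]
      exact hf.norm.mul_const _
    · refine Filter.Eventually.of_forall fun θ _ => ?_
      set z := circleMap c R θ with hz
      have hzc : ‖z - c‖ = R := by simp [hz, abs_of_pos hR]
      have hlt : ‖(z - c) / (w - c)‖ < 1 := by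
        rw [norm_div, hzc]
        exact hq.2
      have hgeom := (hasSum_geometric_of_norm_lt_one hlt).mul_right ((w - c)⁻¹ * f z)
      have hwz : z - w ≠ 0 := by
        intro h
        rw [sub_eq_zero] at h
        rw [← h] at hw
        rw [hzc] at hw
        exact lt_irrefl _ hw
      have h1 : (z - c) / (w - c) ≠ 1 := by
        intro h; rw [h] at hlt; simp at hlt
      have heq : (1 - (z - c) / (w - c))⁻¹ * ((w - c)⁻¹ * f z) = -((z - w)⁻¹ * f z) := by
        have h3 : (w - c) * (1 - (z - c) / (w - c)) = w - z := by
          field_simp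
          ring
        have h4 : (1 - (z - c) / (w - c))⁻¹ * (w - c)⁻¹ = (w - z)⁻¹ := by
          rw [← mul_inv, mul_comm, h3]
        rw [← mul_assoc, h4, ← neg_sub z w, inv_neg, neg_mul]
      rw [heq] at hgeom
      simpa only [deriv_circleMap, smul_eq_mul] using hgeom.mul_left (circleMap 0 R θ * I)
  have : (∮ z in C(c, R), -((z - w)⁻¹ * f z)) = -∮ z in C(c, R), (z - w)⁻¹ * f z := by
    simp only [circleIntegral, smul_eq_mul, mul_neg, intervalIntegral.integral_neg]
  rwa [this] at key

private lemma aux_pow (x w fz : ℂ) (n : ℕ) :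
    (w / x) ^ n * (x⁻¹ * fz) = w ^ n * (x ^ (-(n : ℤ) - 1) * fz) := by
  have h : (-(n : ℤ) - 1) = -((n + 1 : ℕ) : ℤ) := by push_cast; ring
  rw [h, zpow_neg, zpow_natCast, pow_succ, mul_inv, div_pow, div_eq_mul_inv]
  ring

private lemma aux_pow' (x w fz : ℂ) (n : ℕ) :
    (x / w) ^ n * (w⁻¹ * fz) = w ^ (-(n : ℤ) - 1) * (x ^ (n : ℤ) * fz) := by
  have h : (-(n : ℤ) - 1) = -((n + 1 : ℕ) : ℤ) := by push_cast; ring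
  rw [h, zpow_neg, zpow_natCast, zpow_natCast, pow_succ, mul_inv, div_pow, div_eq_mul_inv]
  ring

end Aux

set_option maxHeartbeats 1000000 in
/-- A function holomorphic on an annulus `{z : r < |z - a| < R}` (with `0 ≤ r < R ≤ ∞`)
is represented there by a Laurent series `∑_{n ∈ ℤ} c n (z - a)^n`. -/
theorem laurent_expansion_on_annulus (a : ℂ) (r : ℝ) (R : ℝ≥0∞) (hr : 0 ≤ r)
    (hrR : (ENNReal.ofReal r) < R) (f : ℂ → ℂ)
    (hf : DifferentiableOn ℂ f {z : ℂ | r < ‖z - a‖ ∧ (ENNReal.ofReal ‖z - a‖) < R}) :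
    ∃ c : ℤ → ℂ, ∀ z : ℂ, r < ‖z - a‖ → (ENNReal.ofReal ‖z - a‖) < R →
      HasSum (fun n : ℤ => c n * (z - a) ^ n) (f z) := by
  set U := {z : ℂ | r < ‖z - a‖ ∧ (ENNReal.ofReal ‖z - a‖) < R} with hU
  have hUo : IsOpen U := laurent_isOpen a r R
  -- choose a base radius ρ₀
  obtain ⟨c0, hc0r, hc0R⟩ := exists_between hrR
  have hc0top : c0 ≠ ⊤ := hc0R.ne_top
  set ρ₀ : ℝ := c0.toReal with hρ₀
  have hρ₀r : r < ρ₀ := (ENNReal.ofReal_lt_iff_lt_toReal hr hc0top).1 hc0r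
  have hρ₀R : ENNReal.ofReal ρ₀ < R := by
    rwa [hρ₀, ENNReal.ofReal_toReal hc0top]
  set T : ℂ := 2 * π * Complex.I with hT
  have hTne : T ≠ 0 := by
    simp [hT, Real.pi_ne_zero, Complex.I_ne_zero, Complex.ofReal_ne_zero]
  refine ⟨fun n => T⁻¹ * ∮ ζ in C(a, ρ₀), (ζ - a) ^ (-n - 1) * f ζ, fun z hz1 hz2 => ?_⟩
  -- choose radii around `z`
  set ρ₁ : ℝ := (r + ‖z - a‖) / 2 with hρ₁
  have hρ₁r : r < ρ₁ := by rw [hρ₁]; linarith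
  have hρ₁z : ρ₁ < ‖z - a‖ := by rw [hρ₁]; linarith
  have hρ₁pos : 0 < ρ₁ := hr.trans_lt hρ₁r
  have hρ₁R : ENNReal.ofReal ρ₁ < R :=
    lt_of_le_of_lt (ENNReal.ofReal_le_ofReal hρ₁z.le) hz2
  obtain ⟨c2, hc2z, hc2R⟩ := exists_between hz2
  have hc2top : c2 ≠ ⊤ := hc2R.ne_top
  set ρ₂ : ℝ := c2.toReal with hρ₂
  have hρ₂z : ‖z - a‖ < ρ₂ :=
    (ENNReal.ofReal_lt_iff_lt_toReal (norm_nonneg _) hc2top).1 hc2z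
  have hρ₂R : ENNReal.ofReal ρ₂ < R := by
    rwa [hρ₂, ENNReal.ofReal_toReal hc2top]
  have hρ₂r : r < ρ₂ := hz1.trans hρ₂z
  have hρ₂pos : 0 < ρ₂ := hr.trans_lt hρ₂r
  have hρ₁₂ : ρ₁ < ρ₂ := hρ₁z.trans hρ₂z
  -- circle integrability
  have sphere_sub : ∀ {ρ : ℝ}, r < ρ → ENNReal.ofReal ρ < R → sphere a ρ ⊆ U :=
    fun {ρ} h1 h2 ζ hζ => laurent_subset hr h1 h2
      ⟨sphere_subset_closedBall hζ, fun h => absurd (mem_sphere.1 hζ) (ne_of_lt h)⟩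
  have hint : ∀ {ρ : ℝ}, 0 < ρ → r < ρ → ENNReal.ofReal ρ < R → CircleIntegrable f a ρ :=
    fun {ρ} h0 h1 h2 =>
      ((hf.continuousOn.mono (sphere_sub h1 h2)).circleIntegrable h0.le)
  have hint₁ : CircleIntegrable f a ρ₁ := hint hρ₁pos hρ₁r hρ₁R
  have hint₂ : CircleIntegrable f a ρ₂ := hint hρ₂pos hρ₂r hρ₂R
  -- positive part
  have hwz2 : ‖z - a‖ < ρ₂ := by exact hρ₂z
  have hpos := hasSum_two_pi_I_cauchyPowerSeries_integral hint₂ hwz2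
  have haz : a + (z - a) = z := by ring
  rw [haz] at hpos
  have hposSum : HasSum
      (fun n : ℕ => (T⁻¹ * ∮ ζ in C(a, ρ₀), (ζ - a) ^ (-(n : ℤ) - 1) * f ζ) * (z - a) ^ (n : ℤ))
      (T⁻¹ * ∮ ζ in C(a, ρ₂), (ζ - z)⁻¹ * f ζ) := by
    have hfun : (fun n : ℕ => T⁻¹ * ∮ ζ in C(a, ρ₂), ((z - a) / (ζ - a)) ^ n • (ζ - a)⁻¹ • f ζ)
        = (fun n : ℕ =>
          (T⁻¹ * ∮ ζ in C(a, ρ₀), (ζ - a) ^ (-(n : ℤ) - 1) * f ζ) * (z - a) ^ (n : ℤ)) := by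
      funext n
      simp only [smul_eq_mul, aux_pow, circleIntegral.integral_const_mul,
        laurent_radius_indep hr hf (-(n : ℤ) - 1) hρ₀r hρ₂r hρ₀R hρ₂R, zpow_natCast]
      ring
    have := hpos.mul_left T⁻¹
    rw [hfun] at this
    simpa only [smul_eq_mul] using this
  -- negative part
  have hwz1 : ρ₁ < ‖z - a‖ := by exact hρ₁z
  have hneg := hasSum_neg_part hint₁ hρ₁pos hwz1
  have hnegSum : HasSum
      (fun n : ℕ => (T⁻¹ * ∮ ζ in C(a, ρ₀), (ζ - a) ^ (-(-((n : ℤ) + 1)) - 1) * f ζ)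
        * (z - a) ^ (-((n : ℤ) + 1)))
      (T⁻¹ * -∮ ζ in C(a, ρ₁), (ζ - z)⁻¹ * f ζ) := by
    have hfun : (fun n : ℕ => T⁻¹ * ∮ ζ in C(a, ρ₁), ((ζ - a) / (z - a)) ^ n * ((z - a)⁻¹ * f ζ))
        = (fun n : ℕ => (T⁻¹ * ∮ ζ in C(a, ρ₀), (ζ - a) ^ (-(-((n : ℤ) + 1)) - 1) * f ζ)
            * (z - a) ^ (-((n : ℤ) + 1))) := by
      funext n
      have e1 : (-(-((n : ℤ) + 1)) - 1) = (n : ℤ) := by ring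
      have e2 : (-((n : ℤ) + 1)) = -(n : ℤ) - 1 := by ring
      simp only [e1]
      simp only [e2, aux_pow', circleIntegral.integral_const_mul,
        laurent_radius_indep hr hf ((n : ℤ)) hρ₀r hρ₁r hρ₀R hρ₁R]
      rw [mul_comm ((z - a) ^ (-(n : ℤ) - 1)), ← mul_assoc]
    have := hneg.mul_left T⁻¹
    rw [hfun] at this
    exact this
  -- Cauchy formula on the annulus via the difference quotient
  have hzU : z ∈ U := ⟨hz1, hz2⟩
  have hzb₂ : z ∈ ball a ρ₂ := by rwa [mem_ball, dist_eq_norm]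
  have hzb₁ : z ∉ closedBall a ρ₁ := by
    rw [mem_closedBall, dist_eq_norm]; exact not_le.2 hρ₁z
  have hmem : closedBall a ρ₂ \ ball a ρ₁ ∈ nhds z := by
    refine mem_nhds_iff.2 ⟨ball a ρ₂ \ closedBall a ρ₁,
      fun ζ hζ => ⟨ball_subset_closedBall hζ.1, fun h => hζ.2 (ball_subset_closedBall h)⟩,
      isOpen_ball.sdiff isClosed_closedBall, hzb₂, hzb₁⟩
  have hsubU := laurent_subset (a := a) (R := R) hr hρ₁r hρ₂R
  have hcF : ContinuousOn (dslope f z) (closedBall a ρ₂ \ ball a ρ₁) :=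
    (continuousOn_dslope hmem).2 ⟨hf.continuousOn.mono hsubU,
      hf.differentiableAt (hUo.mem_nhds hzU)⟩
  have hdF : ∀ ζ ∈ (ball a ρ₂ \ closedBall a ρ₁) \ ({z} : Set ℂ),
      DifferentiableAt ℂ (dslope f z) ζ := by
    intro ζ hζ
    refine (differentiableAt_dslope_of_ne (fun h => hζ.2 (by simp [h]))).2
      (hf.differentiableAt (hUo.mem_nhds (hsubU
        ⟨ball_subset_closedBall hζ.1.1, fun h => hζ.1.2 (ball_subset_closedBall h)⟩)))
  have hFF := Complex.circleIntegral_eq_of_differentiable_on_annulus_off_countable hρ₁pos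
    hρ₁₂.le (countable_singleton z) hcF hdF
  -- rewrite the two integrals of the difference quotient
  have hcirc : ∀ {ρ : ℝ}, 0 < ρ → r < ρ → ENNReal.ofReal ρ < R → (∀ ζ ∈ sphere a ρ, ζ ≠ z) →
      (∮ ζ in C(a, ρ), dslope f z ζ)
        = (∮ ζ in C(a, ρ), (ζ - z)⁻¹ * f ζ) - (∮ ζ in C(a, ρ), (ζ - z)⁻¹) * f z := by
    intro ρ h0 h1 h2 hne
    have hinv : ContinuousOn (fun ζ => (ζ - z)⁻¹) (sphere a ρ) :=
      (continuousOn_id.sub continuousOn_const).inv₀ fun ζ hζ => sub_ne_zero.2 (hne ζ hζ)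
    have hI1 : CircleIntegrable (fun ζ => (ζ - z)⁻¹ * f ζ) a ρ :=
      (hinv.mul ((hf.continuousOn).mono (sphere_sub h1 h2))).circleIntegrable h0.le
    have hI2 : CircleIntegrable (fun ζ => (ζ - z)⁻¹ * f z) a ρ :=
      (hinv.mul continuousOn_const).circleIntegrable h0.le
    have heq : EqOn (dslope f z) (fun ζ => (ζ - z)⁻¹ * f ζ - (ζ - z)⁻¹ * f z) (sphere a ρ) := by
      intro ζ hζ
      rw [dslope_of_ne f (hne ζ hζ), slope_def_field]
      simp only [div_eq_inv_mul, mul_sub]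
    rw [circleIntegral.integral_congr h0.le heq, circleIntegral.integral_sub hI1 hI2]
    congr 1
    have := circleIntegral.integral_smul_const (fun ζ => (ζ - z)⁻¹) (f z) a ρ
    simpa only [smul_eq_mul] using this
  have hne₂ : ∀ ζ ∈ sphere a ρ₂, ζ ≠ z := by
    intro ζ hζ h
    subst h
    rw [mem_sphere, dist_eq_norm] at hζ
    exact absurd hζ (ne_of_lt hρ₂z)
  have hne₁ : ∀ ζ ∈ sphere a ρ₁, ζ ≠ z := by
    intro ζ hζ h
    subst h
    rw [mem_sphere, dist_eq_norm] at hζ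
    exact absurd hζ (ne_of_gt hρ₁z)
  have hker₂ : (∮ ζ in C(a, ρ₂), (ζ - z)⁻¹) = T := by
    rw [hT]; exact circleIntegral.integral_sub_inv_of_mem_ball hzb₂
  have hker₁ : (∮ ζ in C(a, ρ₁), (ζ - z)⁻¹) = 0 := by
    refine Complex.circleIntegral_eq_zero_of_differentiable_on_off_countable hρ₁pos.le
      countable_empty ?_ ?_
    · refine (continuousOn_id.sub continuousOn_const).inv₀ fun ζ hζ => sub_ne_zero.2 ?_
      intro h
      exact hzb₁ ((show ζ = z from h) ▸ hζ)
    · intro ζ hζ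
      refine (differentiableAt_id.sub_const z).inv (sub_ne_zero.2 ?_)
      intro h
      exact hzb₁ (h ▸ ball_subset_closedBall hζ.1)
  have hcauchy : (∮ ζ in C(a, ρ₂), (ζ - z)⁻¹ * f ζ) - (∮ ζ in C(a, ρ₁), (ζ - z)⁻¹ * f ζ)
      = T * f z := by
    have h2 := hcirc hρ₂pos hρ₂r hρ₂R hne₂
    have h1 := hcirc hρ₁pos hρ₁r hρ₁R hne₁
    rw [h2, h1, hker₂, hker₁] at hFF
    linear_combination hFF
  -- assemble
  have htotal := HasSum.of_nat_of_neg_add_one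
    (f := fun k : ℤ => (T⁻¹ * ∮ ζ in C(a, ρ₀), (ζ - a) ^ (-k - 1) * f ζ) * (z - a) ^ k)
    hposSum hnegSum
  have : T⁻¹ * (∮ ζ in C(a, ρ₂), (ζ - z)⁻¹ * f ζ)
      + T⁻¹ * -(∮ ζ in C(a, ρ₁), (ζ - z)⁻¹ * f ζ) = f z :=
    calc T⁻¹ * (∮ ζ in C(a, ρ₂), (ζ - z)⁻¹ * f ζ)
        + T⁻¹ * -(∮ ζ in C(a, ρ₁), (ζ - z)⁻¹ * f ζ)
        = T⁻¹ * ((∮ ζ in C(a, ρ₂), (ζ - z)⁻¹ * f ζ)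
            - ∮ ζ in C(a, ρ₁), (ζ - z)⁻¹ * f ζ) := by ring
      _ = T⁻¹ * (T * f z) := by rw [hcauchy]
      _ = f z := by rw [← mul_assoc, inv_mul_cancel₀ hTne, one_mul]
  rwa [this] at htotal
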